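/- arXiv:1605.00953 — 5 statements merged into one kernel-verified Lean document; each statement's English description precedes it below -/
import Mathlib

section
/- In the free unital non-associative algebra k{x,y,z} over a field of characteristic zero, the element p(x;y;z) := Σ (x₍₁₎y₍₁₎)\(x₍₂₎, y₍₂₎, z), where (a,b,c) = (ab)c − a(bc) is the associator and \ is the Hopf left division, equals the associator (x,y,z) = (xy)z − x(yz) when x, y, z are the (primitive) generators; moreover this element is primitive, i.e. Δ(p(x;y;z)) = p(x;y;z) ⊗ 1 + 1 ⊗ p(x;y;z). -/
/- STATEMENT 1: In k{x,y,z}, the element p(x;y;z) := Σ (x₍₁₎y₍₁₎)\(x₍₂₎, y₍₂₎, z)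
equals the associator (x,y,z) = (xy)z − x(yz) when x, y, z are the primitive
generators, and this element is primitive. -/

open TensorProduct

noncomputable section

variable (K : Type*) [Field K] [CharZero K]

/-- The free unital non-associative algebra on three generators x, y, z. -/
abbrev F3 := MonoidAlgebra K (WithOne (FreeMagma (Fin 3)))

def gen3 (i : Fin 3) : F3 K :=
  MonoidAlgebra.single (↑(FreeMagma.of i) : WithOne (FreeMagma (Fin 3))) 1

/-- For fixed `u2` and `z`, the linear map `v2 ↦ (u2*v2)*z - u2*(v2*z)` (an associator). -/
def ascMap (u2 z : F3 K) : F3 K →ₗ[K] F3 K :=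
  ((LinearMap.mul K (F3 K)).flip z).comp ((LinearMap.mul K (F3 K)) u2) -
    ((LinearMap.mul K (F3 K)) u2).comp ((LinearMap.mul K (F3 K)).flip z)

/-- The quadrilinear map `(u1, u2) ↦ ((v1, v2) ↦ (u1*v1) \ (u2, v2, z))`, packaged so
that it can be applied to the Sweedler sums `Δ u` and `Δ v`. -/
def pAux (ldiv : F3 K →ₗ[K] F3 K →ₗ[K] F3 K) (z : F3 K) :
    F3 K →ₗ[K] F3 K →ₗ[K] (F3 K ⊗[K] F3 K →ₗ[K] F3 K) :=
  LinearMap.mk₂ K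
    (fun u1 u2 => TensorProduct.lift
      (ldiv.compl₁₂ ((LinearMap.mul K (F3 K)) u1) (ascMap K u2 z)))
    (fun u1 u1' u2 => by
      apply TensorProduct.ext'; intro v1 v2
      simp [LinearMap.compl₁₂_apply, add_mul])
    (fun c u1 u2 => by
      apply TensorProduct.ext'; intro v1 v2
      simp [LinearMap.compl₁₂_apply, smul_mul_assoc])
    (fun u1 u2 u2' => by
      apply TensorProduct.ext'; intro v1 v2
      simp [LinearMap.compl₁₂_apply, ascMap, add_mul, mul_add]
      abel)
    (fun c u1 u2 => by
      apply TensorProduct.ext'; intro v1 v2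
      simp [LinearMap.compl₁₂_apply, ascMap, smul_mul_assoc, mul_smul_comm, smul_sub])

/-- The Shestakov–Umirbaev element `p(u; v; z) = Σ (u₍₁₎v₍₁₎)\(u₍₂₎, v₍₂₎, z)`. -/
def pOp (Δ : F3 K →ₗ[K] F3 K ⊗[K] F3 K) (ldiv : F3 K →ₗ[K] F3 K →ₗ[K] F3 K)
    (u v z : F3 K) : F3 K :=
  (TensorProduct.lift (pAux K ldiv z) (Δ u)) (Δ v)

theorem p_of_generators_eq_associator_and_primitive
    (Δ : F3 K →ₗ[K] F3 K ⊗[K] F3 K) (ε : F3 K →ₗ[K] K)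
    (ldiv : F3 K →ₗ[K] F3 K →ₗ[K] F3 K)
    (hΔmul : ∀ u v, Δ (u * v) = Δ u * Δ v)
    (hΔone : Δ 1 = 1 ⊗ₜ[K] 1)
    (hΔgen : ∀ i, Δ (gen3 K i) = gen3 K i ⊗ₜ[K] 1 + 1 ⊗ₜ[K] gen3 K i)
    (hεmul : ∀ u v, ε (u * v) = ε u * ε v)
    (hεone : ε 1 = 1)
    (hεgen : ∀ i, ε (gen3 K i) = 0)
    (hldiv₁ : ∀ u v, TensorProduct.lift
        (ldiv.compl₂ ((LinearMap.mul K (F3 K)).flip v)) (Δ u) = ε u • v)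
    (hldiv₂ : ∀ u v, TensorProduct.lift
        ((LinearMap.mul K (F3 K)).compl₂ (ldiv.flip v)) (Δ u) = ε u • v) :
    pOp K Δ ldiv (gen3 K 0) (gen3 K 1) (gen3 K 2) =
        (gen3 K 0 * gen3 K 1) * gen3 K 2 - gen3 K 0 * (gen3 K 1 * gen3 K 2) ∧
      Δ (pOp K Δ ldiv (gen3 K 0) (gen3 K 1) (gen3 K 2)) =
        pOp K Δ ldiv (gen3 K 0) (gen3 K 1) (gen3 K 2) ⊗ₜ[K] 1 +
          1 ⊗ₜ[K] pOp K Δ ldiv (gen3 K 0) (gen3 K 1) (gen3 K 2) := by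
  have hone : ∀ w : F3 K, ldiv 1 w = w := by
    intro w
    have := hldiv₁ 1 w
    rw [hΔone, hεone] at this
    simpa using this
  have key : pOp K Δ ldiv (gen3 K 0) (gen3 K 1) (gen3 K 2) =
      (gen3 K 0 * gen3 K 1) * gen3 K 2 - gen3 K 0 * (gen3 K 1 * gen3 K 2) := by
    simp [pOp, pAux, ascMap, hΔgen, LinearMap.compl₁₂_apply, hone]
  refine ⟨key, ?_⟩
  rw [key]
  simp only [mul_sub, sub_mul, map_sub, hΔmul, hΔgen,
    Algebra.TensorProduct.tmul_mul_tmul, one_mul, mul_one,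
    add_mul, mul_add, TensorProduct.sub_tmul, TensorProduct.tmul_sub]
  abel

end
end

section
/- Dynkin–Specht–Wever Lemma (non-associative form): Let d be a derivation of the free unital non-associative Hopf algebra k{X} that preserves the space of primitive elements, and define γ_d(u) := Σ u₍₁₎\d(u₍₂₎). Then for every u ∈ k{X} and every primitive element a, γ_d(ua) = ε(u)·d(a) + Σ ⟨u₍₁₎; a, γ_d(u₍₂₎)⟩, where ⟨w; a, b⟩ denotes the Shestakov–Umirbaev operation satisfying (w a)b − (w b)a = − Σ w₍₁₎⟨w₍₂₎; a, b⟩. -/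
/- STATEMENT 2 (non-associative Dynkin–Specht–Wever Lemma): Let d be a derivation of the
free unital non-associative Hopf algebra k{X} preserving primitive elements, and set
γ_d(u) := Σ u₍₁₎ \ d(u₍₂₎).  Then for every u and every primitive a,
γ_d(u·a) = ε(u)·d(a) + Σ ⟨u₍₁₎; a, γ_d(u₍₂₎)⟩, where ⟨·;·,·⟩ is the Shestakov–Umirbaev
operation characterized by (w a)b − (w b)a = − Σ w₍₁₎ ⟨w₍₂₎; a, b⟩. -/

open TensorProduct

noncomputable section

variable (K : Type*) [Field K] [CharZero K] (X : Type*)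

/-- The free unital non-associative algebra on `X`. -/
abbrev FNA := MonoidAlgebra K (WithOne (FreeMagma X))

def genF (x : X) : FNA K X :=
  MonoidAlgebra.single (↑(FreeMagma.of x) : WithOne (FreeMagma X)) 1

/-- `γ_d(u) = Σ u₍₁₎ \ d(u₍₂₎)`. -/
def gammaD (Δ : FNA K X →ₗ[K] FNA K X ⊗[K] FNA K X)
    (ldiv : FNA K X →ₗ[K] FNA K X →ₗ[K] FNA K X) (d : FNA K X →ₗ[K] FNA K X) :
    FNA K X →ₗ[K] FNA K X :=
  (TensorProduct.lift (ldiv.compl₂ d)).comp Δ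

/-! ### Auxiliary lemmas -/

section Aux

variable {R M N B : Type*} [CommSemiring R]
  [NonUnitalNonAssocSemiring M] [Module R M] [SMulCommClass R M M] [IsScalarTower R M M]
  [NonUnitalNonAssocSemiring N] [Module R N] [SMulCommClass R N N] [IsScalarTower R N N]
  [NonUnitalNonAssocSemiring B] [Module R B]

/-- A linear map out of a tensor product of (non-unital, non-associative) algebras which is
multiplicative on pure tensors preserves multiplication. -/
lemma DSW.mul_lift (φ : M ⊗[R] N →ₗ[R] B)
    (h : ∀ (m m' : M) (n n' : N),
      φ ((m * m') ⊗ₜ[R] (n * n')) = φ (m ⊗ₜ[R] n) * φ (m' ⊗ₜ[R] n')) :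
    ∀ t s : M ⊗[R] N, φ (t * s) = φ t * φ s := by
  intro t s
  induction t using TensorProduct.induction_on with
  | zero => simp [zero_mul]
  | add t₁ t₂ h₁ h₂ => simp [add_mul, map_add, h₁, h₂]
  | tmul m n =>
    induction s using TensorProduct.induction_on with
    | zero => simp [mul_zero]
    | add s₁ s₂ h₁ h₂ => simp [mul_add, map_add, h₁, h₂]
    | tmul m' n' => rw [Algebra.TensorProduct.tmul_mul_tmul]; exact h ..

end Aux

/-- Basis induction for `FNA k Y`. -/
lemma DSW.basis_induction {k : Type*} [Field k] {Y : Type*} (p : FNA k Y → Prop)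
    (h1 : p 1) (hg : ∀ x : Y, p (genF k Y x))
    (hmul : ∀ u v, p u → p v → p (u * v)) :
    ∀ w : WithOne (FreeMagma Y), p (MonoidAlgebra.single w 1) := by
  intro w
  refine WithOne.cases_on w h1 ?_
  intro v
  induction v using FreeMagma.recOnMul with
  | ih1 x => exact hg x
  | ih2 a b ha hb =>
    have : (MonoidAlgebra.single ((a * b : FreeMagma Y) : WithOne (FreeMagma Y)) 1 : FNA k Y)
        = MonoidAlgebra.single ((a : FreeMagma Y) : WithOne (FreeMagma Y)) (1 : k)
          * MonoidAlgebra.single ((b : FreeMagma Y) : WithOne (FreeMagma Y)) (1 : k) := by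
      rw [MonoidAlgebra.single_mul_single, one_mul, WithOne.coe_mul]
    rw [this]
    exact hmul _ _ ha hb

/-- Extensionality for linear maps out of `FNA k Y` along the multiplicative structure. -/
lemma DSW.lhom_ext {k : Type*} [Field k] {Y : Type*} {M : Type*} [AddCommMonoid M] [Module k M]
    {f g : FNA k Y →ₗ[k] M}
    (h1 : f 1 = g 1) (hg : ∀ x : Y, f (genF k Y x) = g (genF k Y x))
    (hmul : ∀ u v, f u = g u → f v = g v → f (u * v) = g (u * v)) : f = g := by
  apply MonoidAlgebra.lhom_ext'
  intro w
  ext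
  simpa using DSW.basis_induction (fun u => f u = g u) h1 hg hmul w

set_option maxHeartbeats 1600000 in
set_option synthInstance.maxHeartbeats 400000 in
theorem dynkin_specht_wever_nonassociative
    (Δ : FNA K X →ₗ[K] FNA K X ⊗[K] FNA K X) (ε : FNA K X →ₗ[K] K)
    (ldiv : FNA K X →ₗ[K] FNA K X →ₗ[K] FNA K X)
    (hΔmul : ∀ u v, Δ (u * v) = Δ u * Δ v)
    (hΔone : Δ 1 = 1 ⊗ₜ[K] 1)
    (hΔgen : ∀ x : X, Δ (genF K X x) = genF K X x ⊗ₜ[K] 1 + 1 ⊗ₜ[K] genF K X x)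
    (hεmul : ∀ u v, ε (u * v) = ε u * ε v)
    (hεone : ε 1 = 1)
    (hεgen : ∀ x : X, ε (genF K X x) = 0)
    (hldiv₁ : ∀ u v, TensorProduct.lift
        (ldiv.compl₂ ((LinearMap.mul K (FNA K X)).flip v)) (Δ u) = ε u • v)
    (hldiv₂ : ∀ u v, TensorProduct.lift
        ((LinearMap.mul K (FNA K X)).compl₂ (ldiv.flip v)) (Δ u) = ε u • v)
    -- the Shestakov–Umirbaev bracket ⟨w; a, b⟩, characterized by
    -- (w a)b − (w b)a = − Σ w₍₁₎ ⟨w₍₂₎; a, b⟩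
    (br : FNA K X →ₗ[K] FNA K X →ₗ[K] FNA K X →ₗ[K] FNA K X)
    (hbr : ∀ w a b, (w * a) * b - (w * b) * a =
      -(TensorProduct.lift
          ((LinearMap.mul K (FNA K X)).compl₂ ((br.flip a).flip b)) (Δ w)))
    -- d is a derivation preserving primitive elements
    (d : FNA K X →ₗ[K] FNA K X)
    (hd : ∀ u v, d (u * v) = d u * v + u * d v)
    (hdprim : ∀ a, Δ a = a ⊗ₜ[K] 1 + 1 ⊗ₜ[K] a →
      Δ (d a) = d a ⊗ₜ[K] 1 + 1 ⊗ₜ[K] d a) :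
    ∀ (u a : FNA K X), Δ a = a ⊗ₜ[K] 1 + 1 ⊗ₜ[K] a →
      gammaD K X Δ ldiv d (u * a) =
        ε u • d a +
          TensorProduct.lift
            ((br.flip a).compl₂ (gammaD K X Δ ldiv d)) (Δ u) := by
  classical
  haveI iRD1 : RightDistribClass (((FNA K X) ⊗[K] (FNA K X)) ⊗[K] (FNA K X)) :=
    ⟨fun a b c => by exact Distrib.right_distrib a b c⟩
  haveI iLD1 : LeftDistribClass (((FNA K X) ⊗[K] (FNA K X)) ⊗[K] (FNA K X)) :=
    ⟨fun a b c => by exact Distrib.left_distrib a b c⟩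
  haveI iRD2 : RightDistribClass ((FNA K X) ⊗[K] ((FNA K X) ⊗[K] (FNA K X))) :=
    ⟨fun a b c => by exact Distrib.right_distrib a b c⟩
  haveI iLD2 : LeftDistribClass ((FNA K X) ⊗[K] ((FNA K X) ⊗[K] (FNA K X))) :=
    ⟨fun a b c => by exact Distrib.left_distrib a b c⟩
  set m : (FNA K X) →ₗ[K] (FNA K X) →ₗ[K] (FNA K X) := LinearMap.mul K (FNA K X) with hmdef
  -- the "counit contraction" map  x ⊗ y ↦ ε x • y
  set cL : (FNA K X) ⊗[K] (FNA K X) →ₗ[K] (FNA K X) :=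
    TensorProduct.lift ((LinearMap.lsmul K (FNA K X)) ∘ₗ ε) with hcLdef
  have cL_tmul : ∀ x y : (FNA K X), cL (x ⊗ₜ[K] y) = ε x • y := by
    intro x y; simp [hcLdef]
  -- counit law : (ε ⊗ id) ∘ Δ = id
  have hcu : ∀ w : (FNA K X), cL (Δ w) = w := by
    have hmul' : ∀ t s : (FNA K X) ⊗[K] (FNA K X), cL (t * s) = cL t * cL s := by
      refine DSW.mul_lift (R := K) (M := FNA K X) (N := FNA K X) (B := FNA K X) cL ?_
      intro x x' y y'
      rw [cL_tmul, cL_tmul, cL_tmul, hεmul, smul_mul_smul_comm]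
    have : cL ∘ₗ Δ = LinearMap.id (R := K) (M := (FNA K X)) := by
      refine DSW.lhom_ext ?_ ?_ ?_
      · simp [hΔone, cL_tmul, hεone]
      · intro x
        simp [hΔgen, cL_tmul, hεone, hεgen]
      · intro u v hu hv
        simp only [LinearMap.comp_apply, LinearMap.id_apply] at hu hv ⊢
        rw [hΔmul, hmul', hu, hv]
    intro w
    exact congrArg (fun f => f w) this
  -- coassociativity
  have hco : ∀ w : (FNA K X),
      (TensorProduct.assoc K (FNA K X) (FNA K X) (FNA K X)) (LinearMap.rTensor (FNA K X) Δ (Δ w))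
        = LinearMap.lTensor (FNA K X) Δ (Δ w) := by
    have hrT : ∀ t s : (FNA K X) ⊗[K] (FNA K X),
        LinearMap.rTensor (FNA K X) Δ (t * s)
          = LinearMap.rTensor (FNA K X) Δ t * LinearMap.rTensor (FNA K X) Δ s := by
      refine DSW.mul_lift (R := K) (M := FNA K X) (N := FNA K X)
        (B := ((FNA K X) ⊗[K] (FNA K X)) ⊗[K] (FNA K X))
        (LinearMap.rTensor (FNA K X) Δ) ?_
      intro x x' y y'
      simp only [LinearMap.rTensor_tmul, hΔmul, Algebra.TensorProduct.tmul_mul_tmul]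
    have hlT : ∀ t s : (FNA K X) ⊗[K] (FNA K X),
        LinearMap.lTensor (FNA K X) Δ (t * s)
          = LinearMap.lTensor (FNA K X) Δ t * LinearMap.lTensor (FNA K X) Δ s := by
      refine DSW.mul_lift (R := K) (M := FNA K X) (N := FNA K X)
        (B := (FNA K X) ⊗[K] ((FNA K X) ⊗[K] (FNA K X)))
        (LinearMap.lTensor (FNA K X) Δ) ?_
      intro x x' y y'
      simp only [LinearMap.lTensor_tmul, hΔmul, Algebra.TensorProduct.tmul_mul_tmul]
    have hassoc : ∀ t s : ((FNA K X) ⊗[K] (FNA K X)) ⊗[K] (FNA K X),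
        (TensorProduct.assoc K (FNA K X) (FNA K X) (FNA K X)) (t * s)
          = (TensorProduct.assoc K (FNA K X) (FNA K X) (FNA K X)) t
            * (TensorProduct.assoc K (FNA K X) (FNA K X) (FNA K X)) s := by
      have z1 : ∀ s : ((FNA K X) ⊗[K] (FNA K X)) ⊗[K] (FNA K X), 0 * s = 0 :=
        fun s => by exact zero_mul s
      have z2 : ∀ s : ((FNA K X) ⊗[K] (FNA K X)) ⊗[K] (FNA K X), s * 0 = 0 :=
        fun s => by exact mul_zero s
      have z3 : ∀ s : (FNA K X) ⊗[K] ((FNA K X) ⊗[K] (FNA K X)), 0 * s = 0 :=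
        fun s => by exact zero_mul s
      have z4 : ∀ s : (FNA K X) ⊗[K] ((FNA K X) ⊗[K] (FNA K X)), s * 0 = 0 :=
        fun s => by exact mul_zero s
      intro t s
      induction t using TensorProduct.induction_on with
      | zero => simp only [z1, z3, map_zero]
      | add t₁ t₂ h₁ h₂ => simp only [add_mul, map_add, h₁, h₂]
      | tmul p z =>
        induction s using TensorProduct.induction_on with
        | zero => simp only [z2, z4, map_zero]
        | add s₁ s₂ h₁ h₂ => simp only [mul_add, map_add, h₁, h₂]
        | tmul q z' =>
          rw [Algebra.TensorProduct.tmul_mul_tmul]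
          induction p using TensorProduct.induction_on with
          | zero => simp only [zero_mul, zero_tmul, map_zero, z3]
          | add p₁ p₂ h₁ h₂ =>
            simp only [add_mul, add_tmul, map_add, h₁, h₂]
          | tmul x y =>
            induction q using TensorProduct.induction_on with
            | zero => simp only [mul_zero, zero_tmul, tmul_zero, map_zero, z4]
            | add q₁ q₂ h₁ h₂ =>
              simp only [mul_add, add_tmul, map_add, h₁, h₂]
            | tmul x' y' =>
              rw [Algebra.TensorProduct.tmul_mul_tmul]
              simp only [TensorProduct.assoc_tmul,
                Algebra.TensorProduct.tmul_mul_tmul]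
    have key : (((TensorProduct.assoc K (FNA K X) (FNA K X) (FNA K X)) :
          ((FNA K X) ⊗[K] (FNA K X)) ⊗[K] (FNA K X) ≃ₗ[K]
            (FNA K X) ⊗[K] ((FNA K X) ⊗[K] (FNA K X))) :
          ((FNA K X) ⊗[K] (FNA K X)) ⊗[K] (FNA K X) →ₗ[K]
            (FNA K X) ⊗[K] ((FNA K X) ⊗[K] (FNA K X)))
          ∘ₗ (LinearMap.rTensor (FNA K X) Δ) ∘ₗ Δ
        = (LinearMap.lTensor (FNA K X) Δ) ∘ₗ Δ := by
      refine DSW.lhom_ext ?_ ?_ ?_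
      · simp only [LinearMap.comp_apply, LinearEquiv.coe_coe, hΔone,
          LinearMap.rTensor_tmul, LinearMap.lTensor_tmul, TensorProduct.assoc_tmul]
      · intro x
        simp only [LinearMap.comp_apply, LinearEquiv.coe_coe, hΔgen, map_add,
          LinearMap.rTensor_tmul, LinearMap.lTensor_tmul, hΔone,
          TensorProduct.assoc_tmul, tmul_add, add_tmul]
        abel
      · intro u v hu hv
        simp only [LinearMap.comp_apply, LinearEquiv.coe_coe] at hu hv ⊢
        rw [hΔmul, hrT, hassoc, hlT, hu, hv]
    intro w
    exact congrArg (fun f => f w) key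
  intro u a ha
  -- ε vanishes on the primitive element a
  have hεa : ε a = 0 := by
    have h := hcu a
    rw [ha] at h
    rw [map_add, cL_tmul, cL_tmul, hεone, one_smul] at h
    have h2 : ε a • (1 : (FNA K X)) = 0 := by
      have := congrArg (fun z => z - a) h
      simpa using this
    rcases smul_eq_zero.mp h2 with h3 | h3
    · exact h3
    · exact absurd h3 one_ne_zero
  set Ra : (FNA K X) →ₗ[K] (FNA K X) := m.flip a with hRadef
  set γ : (FNA K X) →ₗ[K] (FNA K X) := gammaD K X Δ ldiv d with hγdef
  -- generic reassociation lemmas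
  have W0 : ∀ (D N : (FNA K X) →ₗ[K] (FNA K X) →ₗ[K] (FNA K X)) (t : (FNA K X)) (η : (FNA K X) ⊗[K] (FNA K X)),
      TensorProduct.lift (D.compl₂ (TensorProduct.lift N))
          ((TensorProduct.assoc K (FNA K X) (FNA K X) (FNA K X)) (η ⊗ₜ[K] t))
        = TensorProduct.lift (D.compl₂ (N.flip t)) η := by
    intro D N t η
    induction η using TensorProduct.induction_on with
    | zero => simp
    | add η₁ η₂ h₁ h₂ => simp only [add_tmul, map_add, h₁, h₂]
    | tmul x y => simp
  have W1 : ∀ (D N : (FNA K X) →ₗ[K] (FNA K X) →ₗ[K] (FNA K X)) (Ehat : (FNA K X) ⊗[K] (FNA K X) →ₗ[K] (FNA K X)),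
      (∀ s t : (FNA K X), TensorProduct.lift (D.compl₂ (N.flip t)) (Δ s) = Ehat (s ⊗ₜ[K] t)) →
      ∀ θ : (FNA K X) ⊗[K] (FNA K X),
        TensorProduct.lift (D.compl₂ (TensorProduct.lift N))
          ((TensorProduct.assoc K (FNA K X) (FNA K X) (FNA K X)) (LinearMap.rTensor (FNA K X) Δ θ)) = Ehat θ := by
    intro D N Ehat hk θ
    induction θ using TensorProduct.induction_on with
    | zero => simp
    | add θ₁ θ₂ h₁ h₂ => simp only [map_add, h₁, h₂]
    | tmul s t => rw [LinearMap.rTensor_tmul, W0, hk]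
  have W2 : ∀ (D N D' N' : (FNA K X) →ₗ[K] (FNA K X) →ₗ[K] (FNA K X)),
      (∀ s t : (FNA K X), TensorProduct.lift (D.compl₂ (N.flip t)) (Δ s)
        + TensorProduct.lift (D'.compl₂ (N'.flip t)) (Δ s) = 0) →
      ∀ θ : (FNA K X) ⊗[K] (FNA K X),
        TensorProduct.lift (D.compl₂ (TensorProduct.lift N))
            ((TensorProduct.assoc K (FNA K X) (FNA K X) (FNA K X)) (LinearMap.rTensor (FNA K X) Δ θ))
          + TensorProduct.lift (D'.compl₂ (TensorProduct.lift N'))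
            ((TensorProduct.assoc K (FNA K X) (FNA K X) (FNA K X)) (LinearMap.rTensor (FNA K X) Δ θ)) = 0 := by
    intro D N D' N' hk θ
    induction θ using TensorProduct.induction_on with
    | zero => simp
    | add θ₁ θ₂ h₁ h₂ =>
      simp only [map_add]
      rw [add_add_add_comm, h₁, h₂, add_zero]
    | tmul s t => rw [LinearMap.rTensor_tmul, W0, W0, hk]
  have e3 : ∀ (L : (FNA K X) →ₗ[K] ((FNA K X) ⊗[K] (FNA K X)) →ₗ[K] (FNA K X)) (θ : (FNA K X) ⊗[K] (FNA K X)),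
      TensorProduct.lift L (LinearMap.lTensor (FNA K X) Δ θ)
        = TensorProduct.lift (L.compl₂ Δ) θ := by
    intro L θ
    induction θ using TensorProduct.induction_on with
    | zero => simp
    | add θ₁ θ₂ h₁ h₂ => simp only [map_add, h₁, h₂]
    | tmul x y => simp
  have lift_sub : ∀ (E E' : (FNA K X) →ₗ[K] (FNA K X) →ₗ[K] (FNA K X)) (θ : (FNA K X) ⊗[K] (FNA K X)),
      TensorProduct.lift (E - E') θ
        = TensorProduct.lift E θ - TensorProduct.lift E' θ := by
    intro E E' θ
    induction θ using TensorProduct.induction_on with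
    | zero => simp
    | add θ₁ θ₂ h₁ h₂ =>
      simp only [map_add, h₁, h₂]
      abel
    | tmul x y => simp
  have lift_compr₂ : ∀ (E : (FNA K X) →ₗ[K] (FNA K X) →ₗ[K] (FNA K X)) (f : (FNA K X) →ₗ[K] (FNA K X)) (θ : (FNA K X) ⊗[K] (FNA K X)),
      TensorProduct.lift (E.compr₂ f) θ = f (TensorProduct.lift E θ) := by
    intro E f θ
    induction θ using TensorProduct.induction_on with
    | zero => simp
    | add θ₁ θ₂ h₁ h₂ => simp only [map_add, h₁, h₂]
    | tmul x y => simp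
  -- Σ w₁ γ(w₂) = d w
  have hG : ∀ w : (FNA K X), TensorProduct.lift (m.compl₂ γ) (Δ w) = d w := by
    intro w
    have h0 : m.compl₂ γ = (m.compl₂ (TensorProduct.lift (ldiv.compl₂ d))).compl₂ Δ := by
      ext x y
      simp [hγdef, gammaD]
    have hk : ∀ s t : (FNA K X),
        TensorProduct.lift (m.compl₂ ((ldiv.compl₂ d).flip t)) (Δ s)
          = (d ∘ₗ cL) (s ⊗ₜ[K] t) := by
      intro s t
      have hflip : (ldiv.compl₂ d).flip t = ldiv.flip (d t) := by
        ext x; simp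
      rw [hflip, hldiv₂ s (d t), LinearMap.comp_apply, cL_tmul, map_smul]
    rw [h0, ← e3, ← hco, W1 m (ldiv.compl₂ d) (d ∘ₗ cL) hk (Δ w),
      LinearMap.comp_apply, hcu]
  -- expansion of γ(u·a)
  have e1 : ∀ θ : (FNA K X) ⊗[K] (FNA K X),
      TensorProduct.lift (ldiv.compl₂ d) (θ * (a ⊗ₜ[K] 1 + 1 ⊗ₜ[K] a))
        = TensorProduct.lift ((ldiv ∘ₗ Ra).compl₂ d) θ
          + TensorProduct.lift (ldiv.compl₂ (Ra ∘ₗ d)) θ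
          + TensorProduct.lift (ldiv.compl₂ (m.flip (d a))) θ := by
    intro θ
    induction θ using TensorProduct.induction_on with
    | zero => simp [zero_mul]
    | add θ₁ θ₂ h₁ h₂ =>
      simp only [add_mul, map_add, h₁, h₂]
      abel
    | tmul s t =>
      rw [mul_add, Algebra.TensorProduct.tmul_mul_tmul,
        Algebra.TensorProduct.tmul_mul_tmul, mul_one, mul_one, map_add]
      simp only [TensorProduct.lift.tmul, LinearMap.compl₂_apply, LinearMap.comp_apply,
        LinearMap.flip_apply, LinearMap.mul_apply', hRadef, hmdef]
      rw [hd t a, map_add]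
      abel
  -- expansion of the left-division identity at u·a
  have e2 : ∀ (v : (FNA K X)) (θ : (FNA K X) ⊗[K] (FNA K X)),
      TensorProduct.lift (ldiv.compl₂ (m.flip v)) (θ * (a ⊗ₜ[K] 1 + 1 ⊗ₜ[K] a))
        = TensorProduct.lift ((ldiv ∘ₗ Ra).compl₂ (m.flip v)) θ
          + TensorProduct.lift (ldiv.compl₂ ((m ∘ₗ Ra).flip v)) θ := by
    intro v θ
    induction θ using TensorProduct.induction_on with
    | zero => simp [zero_mul]
    | add θ₁ θ₂ h₁ h₂ =>
      simp only [add_mul, map_add, h₁, h₂]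
      abel
    | tmul s t =>
      rw [mul_add, Algebra.TensorProduct.tmul_mul_tmul,
        Algebra.TensorProduct.tmul_mul_tmul, mul_one, mul_one, map_add]
      simp [hRadef, hmdef]
  -- the left-hand side
  have hL : gammaD K X Δ ldiv d (u * a)
      = TensorProduct.lift ((ldiv ∘ₗ Ra).compl₂ d) (Δ u)
        + TensorProduct.lift (ldiv.compl₂ (Ra ∘ₗ d)) (Δ u)
        + ε u • d a := by
    have : gammaD K X Δ ldiv d (u * a)
        = TensorProduct.lift (ldiv.compl₂ d) (Δ (u * a)) := by
      simp [gammaD]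
    rw [this, hΔmul, ha, e1 (Δ u), hldiv₁ u (d a)]
  -- the bracket sum
  set B2 : (FNA K X) →ₗ[K] (FNA K X) →ₗ[K] (FNA K X) := (br.flip a).compl₂ γ with hB2def
  set F : (FNA K X) →ₗ[K] (FNA K X) := TensorProduct.lift B2 ∘ₗ Δ with hFdef
  set H2 : (FNA K X) →ₗ[K] (FNA K X) := TensorProduct.lift ((m ∘ₗ Ra).compl₂ γ) ∘ₗ Δ with hH2def
  have hH : ∀ w : (FNA K X),
      TensorProduct.lift (m.compl₂ F) (Δ w) = Ra (d w) - H2 w := by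
    intro w
    have h0 : m.compl₂ F = (m.compl₂ (TensorProduct.lift B2)).compl₂ Δ := by
      ext x y
      simp [hFdef]
    have hkbr : ∀ s t : (FNA K X),
        TensorProduct.lift (m.compl₂ (B2.flip t)) (Δ s)
          = TensorProduct.lift ((m.compl₂ γ).compr₂ Ra - (m ∘ₗ Ra).compl₂ γ) (s ⊗ₜ[K] t) := by
      intro s t
      have hflip : B2.flip t = (br.flip a).flip (γ t) := by
        ext x; simp [hB2def]
      have hb := hbr s a (γ t)
      have hb2 : TensorProduct.lift (m.compl₂ ((br.flip a).flip (γ t))) (Δ s)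
          = (s * γ t) * a - (s * a) * γ t := by
        have := congrArg Neg.neg hb
        rw [neg_neg, neg_sub] at this
        rw [← this]
      rw [hflip, hb2]
      simp [hRadef, hmdef]
    rw [h0, ← e3, ← hco,
      W1 m B2 (TensorProduct.lift ((m.compl₂ γ).compr₂ Ra - (m ∘ₗ Ra).compl₂ γ)) hkbr (Δ w),
      lift_sub, lift_compr₂, hG, hH2def]
    rfl
  have hT : TensorProduct.lift B2 (Δ u)
      = TensorProduct.lift (ldiv.compl₂ (Ra ∘ₗ d)) (Δ u)
        - TensorProduct.lift (ldiv.compl₂ H2) (Δ u) := by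
    have hkF : ∀ s t : (FNA K X),
        TensorProduct.lift (ldiv.compl₂ ((m.compl₂ F).flip t)) (Δ s)
          = (F ∘ₗ cL) (s ⊗ₜ[K] t) := by
      intro s t
      have hflip : (m.compl₂ F).flip t = m.flip (F t) := by
        ext x; simp
      rw [hflip, hldiv₁ s (F t)]
      simp only [LinearMap.comp_apply, cL_tmul, map_smul, hFdef]
    have step1 : TensorProduct.lift B2 (Δ u) = (F ∘ₗ cL) (Δ u) := by
      rw [LinearMap.comp_apply, hcu, hFdef]
      rfl
    have step2 : (F ∘ₗ cL) (Δ u)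
        = TensorProduct.lift (ldiv.compl₂ (TensorProduct.lift (m.compl₂ F)))
            ((TensorProduct.assoc K (FNA K X) (FNA K X) (FNA K X)) (LinearMap.rTensor (FNA K X) Δ (Δ u))) := by
      rw [W1 ldiv (m.compl₂ F) (F ∘ₗ cL) hkF (Δ u)]
    have hcompl : (ldiv.compl₂ (TensorProduct.lift (m.compl₂ F))).compl₂ Δ
        = ldiv.compl₂ ((Ra ∘ₗ d) - H2) := by
      refine LinearMap.ext fun x => LinearMap.ext fun y => ?_
      simp only [LinearMap.compl₂_apply, LinearMap.sub_apply, LinearMap.comp_apply]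
      rw [hH y, map_sub]
    rw [step1, step2, hco, e3, hcompl]
    have hsplit : ldiv.compl₂ ((Ra ∘ₗ d) - H2)
        = ldiv.compl₂ (Ra ∘ₗ d) - ldiv.compl₂ H2 := by
      ext x y
      simp
    rw [hsplit, lift_sub]
  -- the ⟨·⟩-free identity coming from `hldiv₁` at `u·a`
  have hA0 : TensorProduct.lift ((ldiv ∘ₗ Ra).compl₂ d) (Δ u)
      + TensorProduct.lift (ldiv.compl₂ H2) (Δ u) = 0 := by
    have hkA : ∀ s t : (FNA K X),
        TensorProduct.lift ((ldiv ∘ₗ Ra).compl₂ ((m.compl₂ γ).flip t)) (Δ s)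
          + TensorProduct.lift (ldiv.compl₂ (((m ∘ₗ Ra).compl₂ γ).flip t)) (Δ s) = 0 := by
      intro s t
      have hf1 : (m.compl₂ γ).flip t = m.flip (γ t) := by
        ext x; simp
      have hf2 : ((m ∘ₗ Ra).compl₂ γ).flip t = (m ∘ₗ Ra).flip (γ t) := by
        ext x; simp
      rw [hf1, hf2, ← e2 (γ t) (Δ s), ← ha, ← hΔmul, hldiv₁ (s * a) (γ t), hεmul,
        hεa, mul_zero, zero_smul]
    have h := W2 (ldiv ∘ₗ Ra) (m.compl₂ γ) ldiv ((m ∘ₗ Ra).compl₂ γ) hkA (Δ u)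
    rw [hco, e3, e3] at h
    have hc1 : ((ldiv ∘ₗ Ra).compl₂ (TensorProduct.lift (m.compl₂ γ))).compl₂ Δ
        = (ldiv ∘ₗ Ra).compl₂ d := by
      refine LinearMap.ext fun x => LinearMap.ext fun y => ?_
      simp only [LinearMap.compl₂_apply, LinearMap.comp_apply]
      rw [hG y]
    have hc2 : (ldiv.compl₂ (TensorProduct.lift ((m ∘ₗ Ra).compl₂ γ))).compl₂ Δ
        = ldiv.compl₂ H2 := by
      ext x y
      simp [hH2def]
    rw [hc1, hc2] at h
    exact h
  -- conclude
  have hP : TensorProduct.lift ((ldiv ∘ₗ Ra).compl₂ d) (Δ u)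
      = - TensorProduct.lift (ldiv.compl₂ H2) (Δ u) :=
    eq_neg_of_add_eq_zero_left hA0
  rw [hL]
  show _ = ε u • d a + TensorProduct.lift B2 (Δ u)
  rw [hT, hP]
  abel

end
end

section
/- In the free unital non-associative algebra k{X} with generators primitive, the derivation y∂_x determined by (y∂_x)(x) = y and (y∂_x)(x') = 0 for all other generators x' preserves the space of primitive elements; more precisely, Δ((y∂_x)(u)) = Σ (y∂_x)(u₍₁₎) ⊗ u₍₂₎ + Σ u₍₁₎ ⊗ (y∂_x)(u₍₂₎) for all u ∈ k{X}. -/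
/- STATEMENT 3: In the free unital non-associative algebra k{x,y} with x, y primitive,
the derivation y∂_x (the derivation with (y∂_x)(x) = y, (y∂_x)(y) = 0) preserves
primitives; more precisely Δ((y∂_x)(u)) = Σ (y∂_x)(u₍₁₎) ⊗ u₍₂₎ + Σ u₍₁₎ ⊗ (y∂_x)(u₍₂₎)
for every u. -/

open TensorProduct

noncomputable section

variable (K : Type*) [Field K] [CharZero K]

set_option linter.unusedSectionVars false

/-- The free unital non-associative algebra on two generators x, y. -/
abbrev F2 := MonoidAlgebra K (WithOne (FreeMagma (Fin 2)))

def gen2 (i : Fin 2) : F2 K :=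
  MonoidAlgebra.single (↑(FreeMagma.of i) : WithOne (FreeMagma (Fin 2))) 1

/-- `D ⊗ id + id ⊗ D` is a derivation on the tensor square when `D` is. -/
lemma tensorDeriv_mul (D : F2 K →ₗ[K] F2 K) (hD : ∀ u v, D (u * v) = D u * v + u * D v)
    (T : F2 K ⊗[K] F2 K →ₗ[K] F2 K ⊗[K] F2 K)
    (hT : T = TensorProduct.map D LinearMap.id + TensorProduct.map LinearMap.id D)
    (s t : F2 K ⊗[K] F2 K) :
    T (s * t) = T s * t + s * T t := by
  induction s using TensorProduct.induction_on with
  | zero => simp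
  | add s₁ s₂ h₁ h₂ =>
    simp only [add_mul, map_add, h₁, h₂]
    abel
  | tmul a b =>
    induction t using TensorProduct.induction_on with
    | zero => simp
    | add t₁ t₂ h₁ h₂ =>
      simp only [mul_add, map_add, h₁, h₂]
      abel
    | tmul c d =>
      simp only [hT, LinearMap.add_apply, TensorProduct.map_tmul, LinearMap.id_apply,
        Algebra.TensorProduct.tmul_mul_tmul, hD, add_tmul, tmul_add, add_mul, mul_add]
      abel

theorem yPartialx_preserves_primitives
    (Δ : F2 K →ₗ[K] F2 K ⊗[K] F2 K)
    (hΔmul : ∀ u v, Δ (u * v) = Δ u * Δ v)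
    (hΔone : Δ 1 = 1 ⊗ₜ[K] 1)
    (hΔgen : ∀ i, Δ (gen2 K i) = gen2 K i ⊗ₜ[K] 1 + 1 ⊗ₜ[K] gen2 K i)
    -- D = y∂_x : the derivation with D x = y and D y = 0
    (D : F2 K →ₗ[K] F2 K)
    (hD : ∀ u v, D (u * v) = D u * v + u * D v)
    (hDone : D 1 = 0)
    (hDx : D (gen2 K 0) = gen2 K 1)
    (hDy : D (gen2 K 1) = 0) :
    (∀ u, Δ (D u) =
        (TensorProduct.map D LinearMap.id) (Δ u) +
          (TensorProduct.map LinearMap.id D) (Δ u)) ∧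
      (∀ a, Δ a = a ⊗ₜ[K] 1 + 1 ⊗ₜ[K] a →
        Δ (D a) = D a ⊗ₜ[K] 1 + 1 ⊗ₜ[K] D a) := by
  set T := TensorProduct.map D LinearMap.id + TensorProduct.map LinearMap.id D with hT
  have main : ∀ u, Δ (D u) = T (Δ u) := by
    -- both sides are linear maps; check on the monomial basis
    suffices h : Δ.comp D = T.comp Δ by
      intro u
      have := LinearMap.congr_fun h u
      simpa using this
    apply MonoidAlgebra.lhom_ext'
    intro m
    apply LinearMap.ext_ring
    simp only [LinearMap.comp_apply, MonoidAlgebra.lsingle_apply]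
    -- goal: Δ (D (single m 1)) = T (Δ (single m 1))
    induction m using WithOne.recOneCoe with
    | one =>
      have : (MonoidAlgebra.single (1 : WithOne (FreeMagma (Fin 2))) (1 : K)) = (1 : F2 K) := rfl
      rw [this, hDone, map_zero, hΔone, hT]
      simp [hDone]
    | coe w =>
      induction w using FreeMagma.recOnMul with
      | ih1 i =>
        have : (MonoidAlgebra.single (↑(FreeMagma.of i) : WithOne (FreeMagma (Fin 2))) (1 : K))
            = gen2 K i := rfl
        rw [this]
        fin_cases i
        · show Δ (D (gen2 K 0)) = T (Δ (gen2 K 0))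
          rw [hDx, hΔgen, hΔgen, hT]
          simp [hDx, hDy, hDone]
        · show Δ (D (gen2 K 1)) = T (Δ (gen2 K 1))
          rw [hDy, map_zero, hΔgen, hT]
          simp [hDy, hDone]
      | ih2 w₁ w₂ ih₁ ih₂ =>
        have hsplit : (MonoidAlgebra.single (↑(w₁ * w₂) : WithOne (FreeMagma (Fin 2))) (1 : K))
            = MonoidAlgebra.single (↑w₁ : WithOne (FreeMagma (Fin 2))) (1 : K) *
              MonoidAlgebra.single (↑w₂ : WithOne (FreeMagma (Fin 2))) (1 : K) := by
          rw [MonoidAlgebra.single_mul_single, one_mul]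
          rfl
        rw [hsplit, hD, map_add, hΔmul, hΔmul, hΔmul, ih₁, ih₂,
          tensorDeriv_mul K D hD T hT]
  refine ⟨main, fun a ha => ?_⟩
  rw [main a, ha, hT]
  simp [hDone]

end
end

section
/- The left-normed non-associative exponential exp_l(x) := Σ_{n≥0} (1/n!)·x^n, with x^n the left-normed power ((xx)x)⋯x, is a group-like element of the non-associative Hopf algebra k{{x}}: Δ(exp_l(x)) = exp_l(x) ⊗ exp_l(x) and ε(exp_l(x)) = 1. -/
/- STATEMENT 8: exp_l(x) := Σ_{n≥0} x^n/n! (left-normed powers) is group-like in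
k{{x}}: Δ(exp_l(x)) = exp_l(x) ⊗ exp_l(x) and ε(exp_l(x)) = 1.  This is stated
coefficientwise: monomials of k{{x}} are the elements of the free unital magma on one
generator (`Option (FreeMagma Unit)`, with `none` the empty monomial 1), Δ is the
algebra-map comultiplication with Δ(x) = x⊗1 + 1⊗x, and a series is determined by its
coefficient function. -/

open FreeMagma

abbrev FM1 := FreeMagma Unit

/-- Number of letters of a monomial. -/
def szM : FM1 → ℕ
  | .of _ => 1
  | .mul l r => szM l + szM r

def szO : Option FM1 → ℕ
  | none => 0
  | some w => szM w

/-- `lnp n` is the left-normed power x^{n+1} = ((x·x)·x)⋯x. -/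
def lnp : ℕ → FM1
  | 0 => .of ()
  | n + 1 => .mul (lnp n) (.of ())

/-- The left-normed power xⁿ as a (possibly empty) monomial. -/
def leftPow : ℕ → Option FM1
  | 0 => none
  | n + 1 => some (lnp n)

/-- The coefficient function of exp_l(x) = Σ_{n≥0} xⁿ/n!. -/
def expCoeff : Option FM1 → ℚ := fun w =>
  if w = leftPow (szO w) then ((szO w).factorial : ℚ)⁻¹ else 0

/-- All factorizations u = u₁·u₂ of a monomial of the free unital magma. -/
def factorizations : Option FM1 → List (Option FM1 × Option FM1)
  | none => [(none, none)]
  | some (.of i) => [(none, some (.of i)), (some (.of i), none)]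
  | some (.mul p q) =>
      [(none, some (.mul p q)), (some (.mul p q), none), (some p, some q)]

/-- The coefficient of Δ(w) (w a monomial) at the basis element u ⊗ v, where Δ is the
unique comultiplication with Δ(x) = x ⊗ 1 + 1 ⊗ x which is an algebra homomorphism. -/
def deltaCoeff : FM1 → Option FM1 → Option FM1 → ℚ
  | .of _, u, v =>
      (if u = some (.of ()) ∧ v = none then 1 else 0) +
        (if u = none ∧ v = some (.of ()) then 1 else 0)
  | .mul a b, u, v =>
      ((factorizations u).map fun s =>
        ((factorizations v).map fun t =>
          deltaCoeff a s.1 t.1 * deltaCoeff b s.2 t.2).sum).sum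

/-- The coefficient of Δ(w) at u ⊗ v for w a monomial of the free *unital* magma. -/
def deltaCoeffO : Option FM1 → Option FM1 → Option FM1 → ℚ
  | none, u, v => if u = none ∧ v = none then 1 else 0
  | some w, u, v => deltaCoeff w u v

/-- The coefficient of Δ(exp_l(x)) = Σ_n (1/n!) Δ(xⁿ) at u ⊗ v. -/
def deltaExpCoeff (u v : Option FM1) : ℚ :=
  ∑ n ∈ Finset.range (szO u + szO v + 1),
    (n.factorial : ℚ)⁻¹ * deltaCoeffO (leftPow n) u v

-- auxiliary
lemma szM_pos (w : FM1) : 0 < szM w := by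
  induction w with
  | of _ => simp [szM]
  | mul l r ihl ihr => simp only [szM]; omega

lemma szM_lnp (n : ℕ) : szM (lnp n) = n + 1 := by
  induction n with
  | zero => rfl
  | succ n ih => simp [lnp, szM, ih]

lemma fm_mul_injEq (a b c d : FM1) :
    (FreeMagma.mul a b = FreeMagma.mul c d) = (a = c ∧ b = d) :=
  propext ⟨fun h => by cases h; exact ⟨rfl, rfl⟩, fun ⟨h1, h2⟩ => h1 ▸ h2 ▸ rfl⟩

def rmx : Option FM1 → Option (Option FM1)
  | none => none
  | some (.of _) => some none
  | some (.mul p (.of _)) => some (some p)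
  | some (.mul _ (.mul _ _)) => none

lemma rmx_some {u u' : Option FM1} (h : rmx u = some u') :
    szO u = szO u' + 1 ∧ (u = leftPow (szO u) ↔ u' = leftPow (szO u')) := by
  match u with
  | none => simp [rmx] at h
  | some (.of i) =>
      obtain ⟨⟩ := i
      simp only [rmx, Option.some.injEq] at h
      subst h
      refine ⟨rfl, ?_⟩
      simp [szO, szM, leftPow, lnp]
  | some (.mul p (.of i)) =>
      obtain ⟨⟩ := i
      simp only [rmx, Option.some.injEq] at h
      subst h
      obtain ⟨m, hm⟩ : ∃ m, szM p = m + 1 := ⟨szM p - 1, by have := szM_pos p; omega⟩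
      constructor
      · simp [szO, szM, hm]
      · simp [szO, szM, hm, leftPow, lnp, ← FreeMagma.mul_eq, fm_mul_injEq]
  | some (.mul p (.mul q r)) => simp [rmx] at h

lemma rmx_none {u : Option FM1} (h : rmx u = none) (hs : szO u ≠ 0) :
    u ≠ leftPow (szO u) := by
  match u with
  | none => simp [szO] at hs
  | some (.of i) => simp [rmx] at h
  | some (.mul p (.of i)) => simp [rmx] at h
  | some (.mul p (.mul q r)) =>
      obtain ⟨m, hm⟩ : ∃ m, szM p + (szM q + szM r) = m + 2 :=
        ⟨szM p + (szM q + szM r) - 2, by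
          have := szM_pos p; have := szM_pos q; have := szM_pos r; omega⟩
      simp [szO, szM, hm, leftPow, lnp, ← FreeMagma.mul_eq, fm_mul_injEq]

lemma stepC (w : FM1) (u v : Option FM1) :
    deltaCoeff (.mul w (.of ())) u v =
      (rmx u).elim 0 (fun u' => deltaCoeff w u' v) +
      (rmx v).elim 0 (fun v' => deltaCoeff w u v') := by
  match u, v with
  | none, none => simp [deltaCoeff, factorizations, rmx]
  | none, some (.of ⟨⟩) => simp [deltaCoeff, factorizations, rmx]
  | none, some (.mul q (.of ⟨⟩)) => simp [deltaCoeff, factorizations, rmx]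
  | none, some (.mul q (.mul r s)) => simp [deltaCoeff, factorizations, rmx]
  | some (.of ⟨⟩), none => simp [deltaCoeff, factorizations, rmx]
  | some (.of ⟨⟩), some (.of ⟨⟩) => simp [deltaCoeff, factorizations, rmx]
  | some (.of ⟨⟩), some (.mul q (.of ⟨⟩)) => simp [deltaCoeff, factorizations, rmx]
  | some (.of ⟨⟩), some (.mul q (.mul r s)) => simp [deltaCoeff, factorizations, rmx]
  | some (.mul p (.of ⟨⟩)), none => simp [deltaCoeff, factorizations, rmx]
  | some (.mul p (.of ⟨⟩)), some (.of ⟨⟩) => simp [deltaCoeff, factorizations, rmx]; ring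
  | some (.mul p (.of ⟨⟩)), some (.mul q (.of ⟨⟩)) =>
      simp [deltaCoeff, factorizations, rmx]; ring
  | some (.mul p (.of ⟨⟩)), some (.mul q (.mul r s)) =>
      simp [deltaCoeff, factorizations, rmx]
  | some (.mul p (.mul p1 p2)), none => simp [deltaCoeff, factorizations, rmx]
  | some (.mul p (.mul p1 p2)), some (.of ⟨⟩) => simp [deltaCoeff, factorizations, rmx]
  | some (.mul p (.mul p1 p2)), some (.mul q (.of ⟨⟩)) =>
      simp [deltaCoeff, factorizations, rmx]
  | some (.mul p (.mul p1 p2)), some (.mul q (.mul r s)) =>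
      simp [deltaCoeff, factorizations, rmx]

lemma key (n : ℕ) (u v : Option FM1) :
    deltaCoeffO (leftPow n) u v =
      if u = leftPow (szO u) ∧ v = leftPow (szO v) ∧ szO u + szO v = n
      then (n.choose (szO u) : ℚ) else 0 := by
  induction n using Nat.strong_induction_on generalizing u v with
  | _ n ih =>
  match n with
  | 0 =>
      have hiff : (u = none ∧ v = none) ↔
          (u = leftPow (szO u) ∧ v = leftPow (szO v) ∧ szO u + szO v = 0) := by
        constructor
        · rintro ⟨rfl, rfl⟩; exact ⟨rfl, rfl, rfl⟩
        · rintro ⟨h1, h2, h3⟩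
          have ha : szO u = 0 := by omega
          have hb : szO v = 0 := by omega
          rw [ha] at h1; rw [hb] at h2; exact ⟨h1, h2⟩
      simp only [leftPow, deltaCoeffO]
      split_ifs with h1 h2 h2
      · obtain ⟨rfl, rfl⟩ := h1; simp [szO]
      · exact absurd (hiff.mp h1) h2
      · exact absurd (hiff.mpr h2) h1
      · exact (if_neg (hiff.not.mp h1)).symm
  | 1 =>
      have e : deltaCoeffO (leftPow 1) u v = deltaCoeff (.of ()) u v := rfl
      rw [e]
      simp only [deltaCoeff]
      have hiff1 : (u = some (.of ()) ∧ v = none) ↔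
          (u = leftPow (szO u) ∧ v = leftPow (szO v) ∧ szO u + szO v = 1 ∧ szO u = 1) := by
        constructor
        · rintro ⟨rfl, rfl⟩
          refine ⟨?_, rfl, ?_, ?_⟩ <;> simp [szO, szM, leftPow, lnp]
        · rintro ⟨h1, h2, h3, h4⟩
          have hb : szO v = 0 := by omega
          rw [h4] at h1; rw [hb] at h2
          exact ⟨h1, h2⟩
      have hiff2 : (u = none ∧ v = some (.of ())) ↔
          (u = leftPow (szO u) ∧ v = leftPow (szO v) ∧ szO u + szO v = 1 ∧ szO u = 0) := by
        constructor
        · rintro ⟨rfl, rfl⟩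
          refine ⟨rfl, ?_, ?_, ?_⟩ <;> simp [szO, szM, leftPow, lnp]
        · rintro ⟨h1, h2, h3, h4⟩
          have hb : szO v = 1 := by omega
          rw [h4] at h1; rw [hb] at h2
          exact ⟨h1, h2⟩
      by_cases hc : u = leftPow (szO u) ∧ v = leftPow (szO v) ∧ szO u + szO v = 1
      · rw [if_pos hc]
        obtain ⟨h1, h2, h3⟩ := hc
        rcases Nat.eq_zero_or_pos (szO u) with h4 | h4
        · rw [if_neg (fun hh => by have := hiff1.mp hh; omega),
            if_pos (hiff2.mpr ⟨h1, h2, h3, h4⟩), h4]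
          norm_num
        · have h4 : szO u = 1 := by omega
          rw [if_pos (hiff1.mpr ⟨h1, h2, h3, h4⟩),
            if_neg (fun hh => by have := hiff2.mp hh; omega), h4]
          norm_num
      · rw [if_neg hc,
          if_neg (fun hh => hc (by have := hiff1.mp hh; tauto)),
          if_neg (fun hh => hc (by have := hiff2.mp hh; tauto))]
        norm_num
  | (m + 2) =>
      have e1 : deltaCoeffO (leftPow (m + 2)) u v
          = deltaCoeff (.mul (lnp m) (.of ())) u v := rfl
      have e2 : ∀ (a b : Option FM1),
          deltaCoeff (lnp m) a b = deltaCoeffO (leftPow (m + 1)) a b := fun _ _ => rfl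
      rw [e1, stepC]
      rcases hru : rmx u with _ | u' <;> rcases hrv : rmx v with _ | v'
      · simp only [Option.elim]
        rw [if_neg]
        · norm_num
        rintro ⟨h1, h2, h3⟩
        rcases Nat.eq_zero_or_pos (szO u) with h4 | h4
        · exact rmx_none hrv (by omega) h2
        · exact rmx_none hru (by omega) h1
      · obtain ⟨hb, hiffv⟩ := rmx_some hrv
        simp only [Option.elim]
        rw [e2, ih (m + 1) (by omega)]
        by_cases hc : u = leftPow (szO u) ∧ v = leftPow (szO v) ∧ szO u + szO v = m + 2
        · obtain ⟨h1, h2, h3⟩ := hc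
          have h4 : szO u = 0 := by
            by_contra h4
            exact rmx_none hru h4 h1
          rw [if_pos ⟨h1, hiffv.mp h2, by omega⟩, if_pos ⟨h1, h2, h3⟩, h4]
          norm_num
        · rw [if_neg, if_neg hc]
          · norm_num
          rintro ⟨h1, h2, h3⟩
          exact hc ⟨h1, hiffv.mpr h2, by omega⟩
      · obtain ⟨ha, hiffu⟩ := rmx_some hru
        simp only [Option.elim]
        rw [e2, ih (m + 1) (by omega)]
        by_cases hc : u = leftPow (szO u) ∧ v = leftPow (szO v) ∧ szO u + szO v = m + 2
        · obtain ⟨h1, h2, h3⟩ := hc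
          have h4 : szO v = 0 := by
            by_contra h4
            exact rmx_none hrv h4 h2
          have h5 : szO u = m + 2 := by omega
          have h6 : szO u' = m + 1 := by omega
          rw [if_pos ⟨hiffu.mp h1, h2, by omega⟩, if_pos ⟨h1, h2, h3⟩, h5, h6]
          simp [Nat.choose_self]
        · rw [if_neg, if_neg hc]
          · norm_num
          rintro ⟨h1, h2, h3⟩
          exact hc ⟨hiffu.mpr h1, h2, by omega⟩
      · obtain ⟨ha, hiffu⟩ := rmx_some hru
        obtain ⟨hb, hiffv⟩ := rmx_some hrv
        simp only [Option.elim]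
        rw [e2, e2, ih (m + 1) (by omega), ih (m + 1) (by omega)]
        by_cases hc : u = leftPow (szO u) ∧ v = leftPow (szO v) ∧ szO u + szO v = m + 2
        · obtain ⟨h1, h2, h3⟩ := hc
          rw [if_pos ⟨hiffu.mp h1, h2, by omega⟩, if_pos ⟨h1, hiffv.mp h2, by omega⟩,
            if_pos ⟨h1, h2, h3⟩]
          have hcc : (m + 2).choose (szO u) =
              (m + 1).choose (szO u') + (m + 1).choose (szO u) := by
            rw [ha]
            exact Nat.choose_succ_succ (m + 1) (szO u')
          rw [hcc]
          push_cast
          ring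
        · rw [if_neg, if_neg, if_neg hc]
          · norm_num
          · rintro ⟨h1, h2, h3⟩
            exact hc ⟨h1, hiffv.mpr h2, by omega⟩
          · rintro ⟨h1, h2, h3⟩
            exact hc ⟨hiffu.mpr h1, h2, by omega⟩

lemma fact_id (a b : ℕ) :
    (((a + b).factorial : ℚ))⁻¹ * ((a + b).choose a : ℚ)
      = ((a.factorial : ℚ))⁻¹ * ((b.factorial : ℚ))⁻¹ := by
  have h1 : (a.factorial : ℚ) ≠ 0 := Nat.cast_ne_zero.mpr (Nat.factorial_ne_zero a)
  have h2 : (b.factorial : ℚ) ≠ 0 := Nat.cast_ne_zero.mpr (Nat.factorial_ne_zero b)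
  have h3 : ((a + b).factorial : ℚ) ≠ 0 := Nat.cast_ne_zero.mpr (Nat.factorial_ne_zero _)
  field_simp
  have h := Nat.add_choose_mul_factorial_mul_factorial b a
  rw [Nat.add_comm b a] at h
  push_cast [← h]
  ring


theorem expl_is_group_like :
    (∀ u v : Option FM1, deltaExpCoeff u v = expCoeff u * expCoeff v) ∧
      expCoeff none = 1 := by
  constructor
  · intro u v
    unfold deltaExpCoeff
    rw [Finset.sum_eq_single_of_mem (szO u + szO v) (Finset.self_mem_range_succ _)]
    · rw [key]
      simp only [expCoeff]
      by_cases h1 : u = leftPow (szO u) <;> by_cases h2 : v = leftPow (szO v)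
      · rw [if_pos ⟨h1, h2, by simp⟩, if_pos h1, if_pos h2]
        exact fact_id (szO u) (szO v)
      · rw [if_neg (fun hh => h2 hh.2.1), if_neg h2]; ring
      · rw [if_neg (fun hh => h1 hh.1), if_neg h1]; ring
      · rw [if_neg (fun hh => h1 hh.1), if_neg h1]; ring
    · intro n _ hn
      rw [key, if_neg (fun hh => hn hh.2.2.symm)]
      ring
  · simp [expCoeff, szO, leftPow]
end

section
/- For tuples J = (j₁,…,j_s) of positive integers, define m_J := ∏_{k=1}^{s} [1/(j_k + j_{k+1} + ⋯ + j_s + 1)]·[1/(j_k − 1)!] and n_J := Σ_{J = J₁||⋯||J_l} (−1)^l m_{J₁}⋯m_{J_l}, summing over all ways to write J as a concatenation of nonempty tuples. Then n_{(1,…,1)} (k ones) equals B_k/k!, where B_k is the k-th Bernoulli number with B_1 = −1/2. -/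
/- STATEMENT 10: For tuples J = (j₁,…,j_s) of positive integers, with
m_J := ∏_k 1/(j_k + ⋯ + j_s + 1) · 1/(j_k − 1)! and
n_J := Σ_{J = J₁||⋯||J_l} (−1)^l m_{J₁}⋯m_{J_l} (over all factorizations of J into
concatenations of nonempty tuples), one has n_{(1,…,1)} (k ones) = B_k/k!. -/

/-- `m_J = ∏_{k=1}^{s} [1/(j_k + ⋯ + j_s + 1)]·[1/(j_k − 1)!]`. -/
def mCoeff : List ℕ → ℚ
  | [] => 1
  | j :: rest => (((j :: rest).sum + 1 : ℕ) : ℚ)⁻¹ * ((j - 1).factorial : ℚ)⁻¹ * mCoeff rest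

/-- `n_J = Σ_{J = J₁||⋯||J_l} (−1)^l m_{J₁}⋯m_{J_l}`, computed recursively over the
first block of a factorization: `nCoeff [] = 1` and for `J ≠ []`,
`nCoeff J = Σ_{∅ ≠ J₁ prefix of J} (−m_{J₁}) · nCoeff (J minus J₁)`. -/
def nCoeff : List ℕ → ℚ
  | [] => 1
  | j :: rest =>
      ∑ k ∈ Finset.range (rest.length + 1),
        (-(mCoeff ((j :: rest).take (k + 1)))) * nCoeff (rest.drop k)
termination_by J => J.length
decreasing_by
  simp only [List.length_drop, List.length_cons]
  omega


lemma m_ones (s : ℕ) : mCoeff (List.replicate s 1) = ((s + 1).factorial : ℚ)⁻¹ := by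
  induction s with
  | zero => simp [mCoeff]
  | succ n ih =>
      rw [List.replicate_succ, mCoeff]
      rw [← List.replicate_succ, ih]
      simp [List.sum_replicate, Nat.factorial_succ]
      push_cast
      ring

lemma f_rec (k : ℕ) : nCoeff (List.replicate (k + 1) 1) =
    ∑ i ∈ Finset.range (k + 1),
      -(((i + 2).factorial : ℚ)⁻¹) * nCoeff (List.replicate (k - i) 1) := by
  rw [List.replicate_succ, nCoeff]
  simp only [List.length_replicate]
  apply Finset.sum_congr rfl
  intro i hi
  rw [Finset.mem_range] at hi
  rw [← List.replicate_succ, List.take_replicate, List.drop_replicate]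
  rw [min_eq_left (by omega), m_ones]

lemma f_eq (k : ℕ) : nCoeff (List.replicate k 1) = bernoulli k / (k.factorial : ℚ) := by
  induction k using Nat.strong_induction_on with
  | _ k ih =>
    match k with
    | 0 => simp [nCoeff]
    | (k+1) =>
      rw [f_rec]
      have hsum := sum_bernoulli (k + 2)
      rw [if_neg (by omega)] at hsum
      rw [Finset.sum_range_succ] at hsum
      -- hsum : ∑ j in range (k+1), C(k+2,j) * bernoulli j + C(k+2,k+1)*bernoulli (k+1) = 0
      have hrefl : (∑ i ∈ Finset.range (k + 1),
          -(((i + 2).factorial : ℚ)⁻¹) * nCoeff (List.replicate (k - i) 1))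
          = ∑ j ∈ Finset.range (k + 1),
            -(((k - j + 2).factorial : ℚ)⁻¹) * nCoeff (List.replicate (k - (k - j)) 1) := by
        rw [← Finset.sum_range_reflect]
        apply Finset.sum_congr rfl
        intro j hj
        rw [Finset.mem_range] at hj
        congr 3 <;> omega
      rw [hrefl]
      have key : ∀ j ∈ Finset.range (k + 1),
          -(((k - j + 2).factorial : ℚ)⁻¹) * nCoeff (List.replicate (k - (k - j)) 1)
            = -(((k + 2).factorial : ℚ)⁻¹) * (((k + 2).choose j : ℚ) * bernoulli j) := by
        intro j hj
        rw [Finset.mem_range] at hj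
        have hj' : j ≤ k := by omega
        rw [Nat.sub_sub_self hj', ih j (by omega)]
        have hcf : ((k + 2).choose j) * j.factorial * (k + 2 - j).factorial
            = (k + 2).factorial := Nat.choose_mul_factorial_mul_factorial (by omega)
        have h2 : k + 2 - j = k - j + 2 := by omega
        rw [h2] at hcf
        have hfne : ∀ n : ℕ, ((n.factorial : ℚ)) ≠ 0 := fun n => by
          exact_mod_cast n.factorial_ne_zero
        have hc := congrArg (Nat.cast : ℕ → ℚ) hcf
        push_cast at hc
        field_simp
        linear_combination bernoulli j * hc
      rw [Finset.sum_congr rfl key, ← Finset.mul_sum]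
      have hb : ∑ j ∈ Finset.range (k + 1), ((k + 2).choose j : ℚ) * bernoulli j
          = -(((k + 2).choose (k + 1) : ℚ) * bernoulli (k + 1)) := by linarith
      rw [hb]
      rw [Nat.choose_succ_self_right]
      have h1 : ((k + 2).factorial : ℚ) = (k + 2) * (k + 1).factorial := by
        rw [Nat.factorial_succ]; push_cast; ring
      rw [h1]
      have hfne : ((k + 1).factorial : ℚ) ≠ 0 := by exact_mod_cast (k+1).factorial_ne_zero
      field_simp
      push_cast; ring

theorem n_ones_eq_bernoulli_div_factorial :
    ∀ k : ℕ, 1 ≤ k →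
      nCoeff (List.replicate k 1) = bernoulli k / (k.factorial : ℚ) := fun k _ => f_eq k
end
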